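/- Let $x \in W_n$ act trivially on the right half tree (fixing leaves $2^{n-1}+1,\dots,2^n$), with cycle type on the left half consisting of cycles of lengths $c_1,\dots,c_k$ summing to $2^{n-1}$. Then $a_n x$ is a product of $k$ disjoint cycles of lengths $2c_1, 2c_2, \dots, 2c_k$. -/

import Mathlib

/-- Leaves of the complete binary rooted tree of height `n`, recorded as the
big-endian bit string of the (0-indexed) leaf label. -/
abbrev Leaf (n : ℕ) := Fin n → Bool

/-- The function underlying the standard generator `a k` of `Aut(T_n)`:
it flips coordinate `n - k` of a leaf lying on the leftmost spine above level `n - k`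
(this is the permutation `(1, 2^(k-1)+1)(2, 2^(k-1)+2) ⋯ (2^(k-1), 2^k)` of the leaves). -/
def aFun (n k : ℕ) (ℓ : Leaf n) : Leaf n := fun t =>
  if (t : ℕ) = n - k ∧ (∀ s : Fin n, (s : ℕ) < n - k → ℓ s = false) then !(ℓ t) else ℓ t

lemma aFun_apply (n k : ℕ) (ℓ : Leaf n) (t : Fin n) :
    aFun n k ℓ t =
      if (t : ℕ) = n - k ∧ (∀ s : Fin n, (s : ℕ) < n - k → ℓ s = false) then !(ℓ t) else ℓ t :=
  rfl

lemma aFun_spine (n k : ℕ) (ℓ : Leaf n) (s : Fin n) (hs : (s : ℕ) < n - k) :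
    aFun n k ℓ s = ℓ s := by
  rw [aFun_apply, if_neg]
  rintro ⟨h1, -⟩
  omega

lemma aFun_cond (n k : ℕ) (ℓ : Leaf n) (t : Fin n) :
    ((t : ℕ) = n - k ∧ (∀ s : Fin n, (s : ℕ) < n - k → aFun n k ℓ s = false)) ↔
    ((t : ℕ) = n - k ∧ (∀ s : Fin n, (s : ℕ) < n - k → ℓ s = false)) := by
  constructor
  · rintro ⟨h1, h2⟩
    refine ⟨h1, fun s hs => ?_⟩
    have h := h2 s hs
    rwa [aFun_spine n k ℓ s hs] at h
  · rintro ⟨h1, h2⟩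
    refine ⟨h1, fun s hs => ?_⟩
    rw [aFun_spine n k ℓ s hs]
    exact h2 s hs

lemma aFun_involutive (n k : ℕ) : Function.Involutive (aFun n k) := by
  intro ℓ
  funext t
  rw [show aFun n k (aFun n k ℓ) t =
    (if (t : ℕ) = n - k ∧ (∀ s : Fin n, (s : ℕ) < n - k → aFun n k ℓ s = false)
      then !(aFun n k ℓ t) else aFun n k ℓ t) from rfl]
  by_cases h : (t : ℕ) = n - k ∧ (∀ s : Fin n, (s : ℕ) < n - k → ℓ s = false)
  · rw [if_pos ((aFun_cond n k ℓ t).mpr h), aFun_apply, if_pos h, Bool.not_not]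
  · rw [if_neg (fun hc => h ((aFun_cond n k ℓ t).mp hc)), aFun_apply, if_neg h]

/-- The standard generator `a_k` of `Aut(T_n)` (as a permutation of the leaves). -/
def aPerm (n k : ℕ) : Equiv.Perm (Leaf n) :=
  Function.Involutive.toPerm (aFun n k) (aFun_involutive n k)

lemma aPerm_apply (n k : ℕ) (ℓ : Leaf n) : aPerm n k ℓ = aFun n k ℓ := rfl

/-- The automorphism group `W_n` of the complete binary rooted tree of height `n`,
realized as the subgroup of permutations of the `2^n` leaves which, at every level `m`,
map leaves agreeing in their first `m` coordinates to leaves agreeing in their first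
`m` coordinates. -/
def treeGroup (n : ℕ) : Subgroup (Equiv.Perm (Leaf n)) where
  carrier := {σ | ∀ m : ℕ, ∀ i j : Leaf n,
    (∀ t : Fin n, (t : ℕ) < m → σ i t = σ j t) ↔ (∀ t : Fin n, (t : ℕ) < m → i t = j t)}
  one_mem' := by intro m i j; simp
  mul_mem' := by
    intro a b ha hb m i j
    simpa [Equiv.Perm.mul_apply] using (ha m (b i) (b j)).trans (hb m i j)
  inv_mem' := by
    intro a ha m i j
    simpa using (ha m (a⁻¹ i) (a⁻¹ j)).symm

lemma mem_treeGroup (n : ℕ) (σ : Equiv.Perm (Leaf n)) :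
    σ ∈ treeGroup n ↔ ∀ m : ℕ, ∀ i j : Leaf n,
      (∀ t : Fin n, (t : ℕ) < m → σ i t = σ j t) ↔ (∀ t : Fin n, (t : ℕ) < m → i t = j t) :=
  Iff.rfl

lemma aPerm_mem (n k : ℕ) : aPerm n k ∈ treeGroup n := by
  have D : ∀ (i j : Leaf n) (m : ℕ), (∀ t : Fin n, (t : ℕ) < m → i t = j t) →
      (∀ t : Fin n, (t : ℕ) < m → aFun n k i t = aFun n k j t) := by
    intro i j m hij t ht
    rw [aFun_apply, aFun_apply]
    by_cases h1 : (t : ℕ) = n - k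
    · have hsp : (∀ s : Fin n, (s : ℕ) < n - k → i s = false) ↔
          (∀ s : Fin n, (s : ℕ) < n - k → j s = false) := by
        constructor
        · intro h s hs
          rw [← hij s (by omega)]; exact h s hs
        · intro h s hs
          rw [hij s (by omega)]; exact h s hs
      by_cases h2 : ∀ s : Fin n, (s : ℕ) < n - k → i s = false
      · rw [if_pos ⟨h1, h2⟩, if_pos ⟨h1, hsp.mp h2⟩, hij t ht]
      · rw [if_neg (fun hc => h2 hc.2), if_neg (fun hc => h2 (hsp.mpr hc.2)), hij t ht]
    · rw [if_neg (fun hc => h1 hc.1), if_neg (fun hc => h1 hc.1), hij t ht]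
  rw [mem_treeGroup]
  intro m i j
  constructor
  · intro h t ht
    have h2 := D (aPerm n k i) (aPerm n k j) m (fun t ht => by
      simpa [aPerm_apply] using h t ht) t ht
    rwa [show aFun n k (aPerm n k i) = i from aFun_involutive n k i,
      show aFun n k (aPerm n k j) = j from aFun_involutive n k j] at h2
  · intro h t ht
    simpa [aPerm_apply] using D i j m h t ht

/-- The standard generator `a_k` as an element of `W_n`. -/
def aEl (n k : ℕ) : ↥(treeGroup n) := ⟨aPerm n k, aPerm_mem n k⟩

/-- The standard `k`-odometer `x_k = a_1 a_2 ⋯ a_k`, viewed inside `W_n`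
(via the natural inclusion of `W_k` acting on the left part of the tree). -/
def xEl (n k : ℕ) : ↥(treeGroup n) :=
  (((List.range k).map fun j => aEl n (j + 1))).prod

/-- `v_i = x_{i+2}^2`, viewed inside `W_n`. -/
def vEl (n i : ℕ) : ↥(treeGroup n) := (xEl n (i + 2)) ^ 2

/-- `m_n = a_{n-1} (x_{n-2})^{x_n}` (with `g^h = h g h⁻¹`), viewed inside `W_n`. -/
def mEl (n : ℕ) : ↥(treeGroup n) :=
  aEl n (n - 1) * (xEl n n * xEl n (n - 2) * (xEl n n)⁻¹)

/-- A permutation of the leaves of `T_n` is an `n`-odometer if it acts transitively on them. -/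
def IsOdometer (n : ℕ) (σ : Equiv.Perm (Leaf n)) : Prop :=
  ∀ i j : Leaf n, ∃ t : ℕ, (σ ^ t) i = j

/-- The generating set `{v_i : i ≤ k - 3}` of `V_k`, inside `W_n`. -/
def VsetK (n k : ℕ) : Set ↥(treeGroup n) := {g | ∃ i : ℕ, i + 3 ≤ k ∧ g = vEl n i}

/-- The subgroup `V_k = ⟨v_{k-3}, …, v_0⟩ ≤ W_n`. -/
def VgrpK (n k : ℕ) : Subgroup ↥(treeGroup n) := Subgroup.closure (VsetK n k)

/-- The group `M_k = ⟨x_k, v_{k-3}, …, v_0⟩` of Section 4, inside `W_n`. -/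
def MgrpK (n k : ℕ) : Subgroup ↥(treeGroup n) :=
  Subgroup.closure (insert (xEl n k) (VsetK n k))

/-- The normal closure `N_k = V_k^{M_k}` of `V_k` in `M_k`, inside `W_n`. -/
def NgrpK (n k : ℕ) : Subgroup ↥(treeGroup n) :=
  Subgroup.closure {g | ∃ m ∈ MgrpK n k, ∃ v ∈ VsetK n k, g = m * v * m⁻¹}

/-- The group `M_n = ⟨x_n, m_n, v_{n-3}, …, v_0⟩` of Section 5. -/
def MgrpB (n : ℕ) : Subgroup ↥(treeGroup n) :=
  Subgroup.closure (insert (xEl n n) (insert (mEl n) (VsetK n n)))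

/-- The normal closure `N_n = ⟨m_n, v_{n-3}, …, v_0⟩^{M_n}` of Section 5. -/
def NgrpB (n : ℕ) : Subgroup ↥(treeGroup n) :=
  Subgroup.closure {g | ∃ m ∈ MgrpB n, ∃ h ∈ insert (mEl n) (VsetK n n), g = m * h * m⁻¹}

/-- `U_n = V_n^{⟨x_n⟩}`. -/
def Ugrp (n : ℕ) : Subgroup ↥(treeGroup n) :=
  Subgroup.closure {g | ∃ m ∈ Subgroup.closure {xEl n n}, ∃ v ∈ VsetK n n, g = m * v * m⁻¹}



section AuxDouble

open Equiv Equiv.Perm Finset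

variable {n : ℕ}

lemma flip_eval (ℓ : Leaf n) (t : Fin n) :
    aPerm n n ℓ t = if (t : ℕ) = 0 then !(ℓ t) else ℓ t := by
  rw [aPerm_apply, aFun_apply, Nat.sub_self]
  by_cases h : (t : ℕ) = 0
  · rw [if_pos ⟨h, fun s hs => absurd hs (Nat.not_lt_zero _)⟩, if_pos h]
  · rw [if_neg (fun hc => h hc.1), if_neg h]

lemma flip_zero (hn : 0 < n) (ℓ : Leaf n) :
    aPerm n n ℓ ⟨0, hn⟩ = !(ℓ ⟨0, hn⟩) := by
  rw [flip_eval, if_pos rfl]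

lemma aflip_flip (ℓ : Leaf n) : aPerm n n (aPerm n n ℓ) = ℓ :=
  aFun_involutive n n ℓ

lemma flip_ne (hn : 0 < n) (ℓ : Leaf n) : aPerm n n ℓ ≠ ℓ := by
  intro h
  have := congrFun h ⟨0, hn⟩
  rw [flip_zero hn] at this
  simp at this

/-- The doubled cycle: for `g` supported on the left half, the cycle of `a*g`
through the support of `g` and its flip. -/
def dbl (hn : 0 < n) (g : Equiv.Perm (Leaf n))
    (hg : ∀ ℓ ∈ g.support, ℓ ⟨0, hn⟩ = false) : Equiv.Perm (Leaf n) where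
  toFun ℓ := if ℓ ∈ g.support then aPerm n n (g ℓ)
    else if aPerm n n ℓ ∈ g.support then aPerm n n ℓ else ℓ
  invFun ℓ := if ℓ ∈ g.support then aPerm n n ℓ
    else if aPerm n n ℓ ∈ g.support then g⁻¹ (aPerm n n ℓ) else ℓ
  left_inv := by
    have Hf : ∀ ℓ ∈ g.support, aPerm n n ℓ ∉ g.support := by
      intro ℓ hℓ h
      have h2 := hg _ h
      rw [flip_zero hn, hg _ hℓ] at h2
      simp at h2
    intro ℓ
    by_cases h1 : ℓ ∈ g.support
    · have hq : g ℓ ∈ g.support := apply_mem_support.mpr h1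
      simp only [if_pos h1, if_neg (Hf _ hq), aflip_flip, if_pos hq]
      exact g.symm_apply_apply ℓ
    · by_cases h2 : aPerm n n ℓ ∈ g.support
      · simp only [if_neg h1, if_pos h2, aflip_flip, if_neg h1]
      · simp only [if_neg h1, if_neg h2]
  right_inv := by
    have Hf : ∀ ℓ ∈ g.support, aPerm n n ℓ ∉ g.support := by
      intro ℓ hℓ h
      have h2 := hg _ h
      rw [flip_zero hn, hg _ hℓ] at h2
      simp at h2
    intro ℓ
    by_cases h1 : ℓ ∈ g.support
    · simp only [if_pos h1, if_neg (Hf _ h1), aflip_flip, if_pos h1]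
    · by_cases h2 : aPerm n n ℓ ∈ g.support
      · have hq : g⁻¹ (aPerm n n ℓ) ∈ g.support := by
          rw [← support_inv] at h2 ⊢
          exact apply_mem_support.mpr h2
        simp only [if_neg h1, if_pos h2, if_pos hq]
        rw [show g (g⁻¹ (aPerm n n ℓ)) = aPerm n n ℓ from Equiv.apply_symm_apply g _, aflip_flip]
      · simp only [if_neg h1, if_neg h2]

variable {hn : 0 < n} {g : Equiv.Perm (Leaf n)}
  {hg : ∀ ℓ ∈ g.support, ℓ ⟨0, hn⟩ = false}

lemma dbl_apply_mem {ℓ : Leaf n} (h : ℓ ∈ g.support) :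
    dbl hn g hg ℓ = aPerm n n (g ℓ) := by
  show (if ℓ ∈ g.support then aPerm n n (g ℓ) else _) = _
  rw [if_pos h]

lemma dbl_apply_flip {ℓ : Leaf n} (h1 : ℓ ∉ g.support)
    (h2 : aPerm n n ℓ ∈ g.support) : dbl hn g hg ℓ = aPerm n n ℓ := by
  show (if ℓ ∈ g.support then aPerm n n (g ℓ)
    else if aPerm n n ℓ ∈ g.support then aPerm n n ℓ else ℓ) = _
  rw [if_neg h1, if_pos h2]

lemma dbl_apply_other {ℓ : Leaf n} (h1 : ℓ ∉ g.support)
    (h2 : aPerm n n ℓ ∉ g.support) : dbl hn g hg ℓ = ℓ := by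
  show (if ℓ ∈ g.support then aPerm n n (g ℓ)
    else if aPerm n n ℓ ∈ g.support then aPerm n n ℓ else ℓ) = _
  rw [if_neg h1, if_neg h2]

lemma mem_dbl_support {ℓ : Leaf n} :
    ℓ ∈ (dbl hn g hg).support ↔ ℓ ∈ g.support ∨ aPerm n n ℓ ∈ g.support := by
  rw [mem_support]
  constructor
  · intro h
    by_contra hc
    push_neg at hc
    exact h (dbl_apply_other hc.1 hc.2)
  · rintro (h | h)
    · rw [dbl_apply_mem h]
      intro hc
      have := congrFun hc ⟨0, hn⟩
      rw [flip_zero hn, hg _ (apply_mem_support.mpr h), hg _ h] at this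
      simp at this
    · by_cases h1 : ℓ ∈ g.support
      · rw [dbl_apply_mem h1]
        intro hc
        have := congrFun hc ⟨0, hn⟩
        rw [flip_zero hn, hg _ (apply_mem_support.mpr h1), hg _ h1] at this
        simp at this
      · rw [dbl_apply_flip h1 h]
        exact flip_ne hn ℓ

lemma dbl_support :
    (dbl hn g hg).support = g.support ∪ g.support.image (aPerm n n) := by
  ext ℓ
  rw [mem_dbl_support, Finset.mem_union, Finset.mem_image]
  constructor
  · rintro (h | h)
    · exact Or.inl h
    · exact Or.inr ⟨aPerm n n ℓ, h, aflip_flip ℓ⟩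
  · rintro (h | ⟨q, hq, rfl⟩)
    · exact Or.inl h
    · rw [aflip_flip]
      exact Or.inr hq

lemma dbl_support_card :
    (dbl hn g hg).support.card = 2 * g.support.card := by
  rw [dbl_support, Finset.card_union_of_disjoint, Finset.card_image_of_injective _ (aPerm n n).injective, two_mul]
  rw [Finset.disjoint_left]
  rintro a ha hima
  rw [Finset.mem_image] at hima
  obtain ⟨q, hq, rfl⟩ := hima
  have := hg _ ha
  rw [flip_zero hn, hg _ hq] at this
  simp at this

lemma dbl_sq {p : Leaf n} (hp : p ∈ g.support) :
    dbl hn g hg (dbl hn g hg p) = g p := by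
  rw [dbl_apply_mem hp]
  have hq : g p ∈ g.support := apply_mem_support.mpr hp
  have h1 : aPerm n n (g p) ∉ g.support := by
    intro h
    have := hg _ h
    rw [flip_zero hn, hg _ hq] at this
    simp at this
  rw [dbl_apply_flip h1 (by rw [aflip_flip]; exact hq), aflip_flip]

lemma dbl_pow_even (k : ℕ) {p : Leaf n} (hp : p ∈ g.support) :
    (dbl hn g hg ^ (2 * k)) p = (g ^ k) p := by
  induction k generalizing p with
  | zero => simp
  | succ k ih =>
    have h1 : 2 * (k + 1) = 2 * k + 2 := by ring
    have h2 : (dbl hn g hg ^ (2 * k + 2)) p = (dbl hn g hg ^ (2 * k)) (dbl hn g hg (dbl hn g hg p)) := by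
      rw [pow_add]
      rfl
    rw [h1, h2, dbl_sq hp, ih (apply_mem_support.mpr hp), ← Equiv.Perm.mul_apply, ← pow_succ]

lemma dbl_isCycle (hc : g.IsCycle) : (dbl hn g hg).IsCycle := by
  obtain ⟨p₀, hp₀, hall⟩ := hc
  have hp₀' : p₀ ∈ g.support := mem_support.mpr hp₀
  refine ⟨p₀, ?_, ?_⟩
  · rw [dbl_apply_mem hp₀']
    intro hcon
    have := congrFun hcon ⟨0, hn⟩
    rw [flip_zero hn, hg _ (apply_mem_support.mpr hp₀'), hg _ hp₀'] at this
    simp at this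
  · intro y hy
    have hy' : y ∈ (dbl hn g hg).support := mem_support.mpr hy
    rw [mem_dbl_support] at hy'
    rcases hy' with h | h
    · obtain ⟨k, -, hk⟩ := (hall (mem_support.mp h)).exists_pow_eq'
      exact ⟨((2 * k : ℕ) : ℤ), by rw [zpow_natCast, dbl_pow_even k hp₀', hk]⟩
    · have hq : g⁻¹ (aPerm n n y) ∈ g.support := by
        rw [← support_inv] at h ⊢
        exact apply_mem_support.mpr h
      obtain ⟨k, -, hk⟩ := (hall (mem_support.mp hq)).exists_pow_eq'
      refine ⟨((2 * k + 1 : ℕ) : ℤ), ?_⟩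
      rw [zpow_natCast, pow_succ', Equiv.Perm.mul_apply, dbl_pow_even k hp₀', hk,
        dbl_apply_mem hq, show g (g⁻¹ (aPerm n n y)) = aPerm n n y from Equiv.apply_symm_apply g _, aflip_flip]

lemma prod_fix_of_all {α : Type*} (l : List (Equiv.Perm α)) (ℓ : α)
    (h : ∀ σ ∈ l, σ ℓ = ℓ) : l.prod ℓ = ℓ := by
  induction l with
  | nil => rfl
  | cons τ l ih =>
      rw [List.prod_cons, Equiv.Perm.mul_apply,
        ih (fun σ hσ => h σ (List.mem_cons_of_mem _ hσ)), h τ List.mem_cons_self]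

lemma prod_eq_of_mem {α : Type*} [DecidableEq α] [Fintype α] (l : List (Equiv.Perm α))
    (hd : l.Pairwise Equiv.Perm.Disjoint) (σ : Equiv.Perm α) (hσ : σ ∈ l) (ℓ : α)
    (hℓ : ℓ ∈ σ.support) : l.prod ℓ = σ ℓ := by
  induction l with
  | nil => simp at hσ
  | cons τ l ih =>
      rw [List.prod_cons, Equiv.Perm.mul_apply]
      obtain ⟨hd1, hd2⟩ := List.pairwise_cons.mp hd
      rcases List.mem_cons.mp hσ with rfl | hσ'
      · rw [prod_fix_of_all]
        intro ρ hρ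
        rcases hd1 ρ hρ ℓ with h | h
        · exact absurd h (mem_support.mp hℓ)
        · exact h
      · rw [ih hd2 hσ']
        rcases hd1 σ hσ' (σ ℓ) with h | h
        · exact h
        · exact absurd h (mem_support.mp (apply_mem_support.mpr hℓ))

end AuxDouble

/-- if `x ∈ W_n` acts trivially on the right half tree and its full cycle type
on the left half (including 1-cycles, recorded by the multiset `c`) consists of cycles of
lengths summing to `2^(n-1)`, then `a_n x` is a product of disjoint cycles of the doubled
lengths `2·c`. -/
theorem aEl_mul_cycleType (n : ℕ) (hn : 0 < n) (x : ↥(treeGroup n)) (c : Multiset ℕ)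
    (hx : ∀ ℓ : Leaf n, ℓ ⟨0, hn⟩ = true → (x : Equiv.Perm (Leaf n)) ℓ = ℓ)
    (hpos : ∀ m ∈ c, 1 ≤ m) (hsum : c.sum = 2 ^ (n - 1))
    (hcyc : c.filter (fun m => 2 ≤ m) = Equiv.Perm.cycleType (x : Equiv.Perm (Leaf n)))
    (hfix : Multiset.count 1 c =
      Nat.card {ℓ : Leaf n // ℓ ⟨0, hn⟩ = false ∧ (x : Equiv.Perm (Leaf n)) ℓ = ℓ}) :
    Equiv.Perm.cycleType ((aEl n n * x : ↥(treeGroup n)) : Equiv.Perm (Leaf n)) =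
      c.map (fun m => 2 * m) := by
  classical
  set X : Equiv.Perm (Leaf n) := (x : Equiv.Perm (Leaf n)) with hXdef
  have hXsupp : ∀ g ∈ X.cycleFactorsFinset, ∀ ℓ ∈ g.support, ℓ ⟨0, hn⟩ = false := by
    intro g hg ℓ hℓ
    by_contra h
    have htrue : ℓ ⟨0, hn⟩ = true := by
      cases hb : ℓ ⟨0, hn⟩
      · exact absurd hb h
      · rfl
    have h1 : g ℓ = X ℓ := (Equiv.Perm.mem_cycleFactorsFinset_iff.mp hg).2 ℓ hℓ
    have h2 : X ℓ = ℓ := hx ℓ htrue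
    exact (Equiv.Perm.mem_support.mp hℓ) (h1.trans h2)
  have hXsupp' : ∀ g ∈ X.cycleFactorsFinset.toList, ∀ ℓ ∈ g.support, ℓ ⟨0, hn⟩ = false :=
    fun g hg => hXsupp g (Finset.mem_toList.mp hg)
  set F : Finset (Leaf n) :=
    Finset.univ.filter (fun ℓ => ℓ ⟨0, hn⟩ = false ∧ X ℓ = ℓ) with hFdef
  set l₁ : List (Equiv.Perm (Leaf n)) :=
    X.cycleFactorsFinset.toList.attach.map (fun g => dbl hn g.1 (hXsupp' g.1 g.2)) with hl₁
  set l₂ : List (Equiv.Perm (Leaf n)) :=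
    F.toList.map (fun p => Equiv.swap p (aPerm n n p)) with hl₂
  -- pairwise disjointness
  have hd : (l₁ ++ l₂).Pairwise Equiv.Perm.Disjoint := by
    rw [List.pairwise_append]
    refine ⟨?_, ?_, ?_⟩
    · rw [hl₁, List.pairwise_map]
      have hnd : X.cycleFactorsFinset.toList.attach.Pairwise (· ≠ ·) :=
        (List.nodup_attach.mpr (Finset.nodup_toList _))
      refine hnd.imp ?_
      intro a b hab
      have hab' : a.1 ≠ b.1 := fun h => hab (Subtype.ext h)
      have hsd : _root_.Disjoint (a.1).support (b.1).support :=
        Equiv.Perm.disjoint_iff_disjoint_support.mp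
          ((Equiv.Perm.cycleFactorsFinset_pairwise_disjoint X)
            (Finset.mem_coe.mpr (Finset.mem_toList.mp a.2))
            (Finset.mem_coe.mpr (Finset.mem_toList.mp b.2)) hab')
      rw [Equiv.Perm.disjoint_iff_disjoint_support, Finset.disjoint_left]
      intro q hq hq'
      rw [mem_dbl_support] at hq hq'
      have ca := hXsupp' a.1 a.2
      have cb := hXsupp' b.1 b.2
      rcases hq with h | h <;> rcases hq' with h' | h'
      · exact Finset.disjoint_left.mp hsd h h'
      · have := cb _ h'
        rw [flip_zero hn, ca _ h] at this
        simp at this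
      · have := ca _ h
        rw [flip_zero hn, cb _ h'] at this
        simp at this
      · exact Finset.disjoint_left.mp hsd h h'
    · rw [hl₂, List.pairwise_map]
      refine List.Pairwise.imp_of_mem ?_ (Finset.nodup_toList F)
      intro p q hp hq hpq
      have hp0 : p ⟨0, hn⟩ = false := ((Finset.mem_filter.mp (Finset.mem_toList.mp hp)).2).1
      have hq0 : q ⟨0, hn⟩ = false := ((Finset.mem_filter.mp (Finset.mem_toList.mp hq)).2).1
      rw [Equiv.Perm.disjoint_iff_disjoint_support,
        Equiv.Perm.support_swap (Ne.symm (flip_ne hn p)),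
        Equiv.Perm.support_swap (Ne.symm (flip_ne hn q)), Finset.disjoint_left]
      intro a ha ha'
      have hfalse : ∀ r : Leaf n, r ⟨0, hn⟩ = false → aPerm n n r ⟨0, hn⟩ = true := by
        intro r hr
        rw [flip_zero hn, hr]
        rfl
      have h1 := Finset.mem_insert.mp ha
      have h2 := Finset.mem_insert.mp ha'
      simp only [Finset.mem_singleton] at h1 h2
      rcases h1 with rfl | rfl <;> rcases h2 with h2 | h2
      · exact hpq h2
      · rw [h2, hfalse q hq0] at hp0
        exact Bool.noConfusion hp0
      · rw [← h2, hfalse p hp0] at hq0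
        exact Bool.noConfusion hq0
      · exact hpq ((aPerm n n).injective h2)
    · intro σ hσ τ hτ
      rw [hl₁, List.mem_map] at hσ
      rw [hl₂, List.mem_map] at hτ
      obtain ⟨g, hgmem, rfl⟩ := hσ
      obtain ⟨p, hpmem, rfl⟩ := hτ
      obtain ⟨hp0, hpfix⟩ := (Finset.mem_filter.mp (Finset.mem_toList.mp hpmem)).2
      rw [Equiv.Perm.disjoint_iff_disjoint_support, Finset.disjoint_left]
      intro q hq hq'
      rw [mem_dbl_support] at hq
      rw [Equiv.Perm.support_swap (Ne.symm (flip_ne hn p))] at hq'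
      have hgX : ∀ a ∈ g.1.support, g.1 a = X a :=
        (Equiv.Perm.mem_cycleFactorsFinset_iff.mp (Finset.mem_toList.mp g.2)).2
      have hp_not : p ∉ g.1.support := fun h =>
        (Equiv.Perm.mem_support.mp h) ((hgX p h).trans hpfix)
      have hfp_not : aPerm n n p ∉ g.1.support := by
        intro h
        have := hXsupp' g.1 g.2 _ h
        rw [flip_zero hn, hp0] at this
        exact Bool.noConfusion this
      rcases Finset.mem_insert.mp hq' with rfl | hq''
      · rcases hq with h | h
        · exact hp_not h
        · exact hfp_not h
      · rw [Finset.mem_singleton.mp hq''] at hq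
        rcases hq with h | h
        · exact hfp_not h
        · rw [aflip_flip] at h
          exact hp_not h
  -- all cycles
  have hcycs : ∀ σ ∈ l₁ ++ l₂, σ.IsCycle := by
    intro σ hσ
    rcases List.mem_append.mp hσ with h | h
    · rw [hl₁, List.mem_map] at h
      obtain ⟨g, -, rfl⟩ := h
      exact dbl_isCycle
        (Equiv.Perm.mem_cycleFactorsFinset_iff.mp (Finset.mem_toList.mp g.2)).1
    · rw [hl₂, List.mem_map] at h
      obtain ⟨p, -, rfl⟩ := h
      exact Equiv.Perm.isCycle_swap (Ne.symm (flip_ne hn p))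
  -- the product
  have h0 : (l₁ ++ l₂).prod = aPerm n n * X := by
    ext ℓ
    have hax : (aPerm n n * X) ℓ = aPerm n n (X ℓ) := rfl
    rw [hax]
    by_cases hz : ℓ ⟨0, hn⟩ = false
    · by_cases hfx : X ℓ = ℓ
      · have hmem : Equiv.swap ℓ (aPerm n n ℓ) ∈ l₁ ++ l₂ :=
          List.mem_append.mpr (Or.inr (List.mem_map.mpr
            ⟨ℓ, Finset.mem_toList.mpr (Finset.mem_filter.mpr
              ⟨Finset.mem_univ _, hz, hfx⟩), rfl⟩))
        rw [prod_eq_of_mem _ hd _ hmem ℓ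
          (by rw [Equiv.Perm.support_swap (Ne.symm (flip_ne hn ℓ))]
              exact Finset.mem_insert_self _ _),
          Equiv.swap_apply_left, hfx]
      · have hsupp : ℓ ∈ X.support := Equiv.Perm.mem_support.mpr hfx
        have hgmem : X.cycleOf ℓ ∈ X.cycleFactorsFinset :=
          Equiv.Perm.cycleOf_mem_cycleFactorsFinset_iff.mpr hsupp
        have hgT : X.cycleOf ℓ ∈ X.cycleFactorsFinset.toList := Finset.mem_toList.mpr hgmem
        have hℓg : ℓ ∈ (X.cycleOf ℓ).support :=
          Equiv.Perm.mem_support_cycleOf_iff.mpr ⟨Equiv.Perm.SameCycle.refl _ _, hsupp⟩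
        have hmem : dbl hn (X.cycleOf ℓ) (hXsupp' _ hgT) ∈ l₁ ++ l₂ :=
          List.mem_append.mpr (Or.inl (List.mem_map.mpr
            ⟨⟨X.cycleOf ℓ, hgT⟩, List.mem_attach _ _, rfl⟩))
        rw [prod_eq_of_mem _ hd _ hmem ℓ (mem_dbl_support.mpr (Or.inl hℓg)),
          dbl_apply_mem hℓg, Equiv.Perm.cycleOf_apply_self]
    · have hz' : ℓ ⟨0, hn⟩ = true := by
        cases hb : ℓ ⟨0, hn⟩
        · exact absurd hb hz
        · rfl
      have hXℓ : X ℓ = ℓ := hx ℓ hz'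
      rw [hXℓ]
      have hp0 : (aPerm n n ℓ) ⟨0, hn⟩ = false := by rw [flip_zero hn, hz']; rfl
      by_cases hfx : X (aPerm n n ℓ) = aPerm n n ℓ
      · have hmem : Equiv.swap (aPerm n n ℓ) (aPerm n n (aPerm n n ℓ)) ∈ l₁ ++ l₂ :=
          List.mem_append.mpr (Or.inr (List.mem_map.mpr
            ⟨aPerm n n ℓ, Finset.mem_toList.mpr (Finset.mem_filter.mpr
              ⟨Finset.mem_univ _, hp0, hfx⟩), rfl⟩))
        rw [show Equiv.swap (aPerm n n ℓ) (aPerm n n (aPerm n n ℓ))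
            = Equiv.swap (aPerm n n ℓ) ℓ from by rw [aflip_flip]] at hmem
        rw [prod_eq_of_mem _ hd _ hmem ℓ
            (by rw [Equiv.Perm.support_swap (flip_ne hn ℓ)]
                exact Finset.mem_insert.mpr (Or.inr (Finset.mem_singleton_self _))),
          Equiv.swap_apply_right]
      · have hsupp : aPerm n n ℓ ∈ X.support := Equiv.Perm.mem_support.mpr hfx
        have hgmem : X.cycleOf (aPerm n n ℓ) ∈ X.cycleFactorsFinset :=
          Equiv.Perm.cycleOf_mem_cycleFactorsFinset_iff.mpr hsupp
        have hgT : X.cycleOf (aPerm n n ℓ) ∈ X.cycleFactorsFinset.toList :=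
          Finset.mem_toList.mpr hgmem
        have hpg : aPerm n n ℓ ∈ (X.cycleOf (aPerm n n ℓ)).support :=
          Equiv.Perm.mem_support_cycleOf_iff.mpr ⟨Equiv.Perm.SameCycle.refl _ _, hsupp⟩
        have hmem : dbl hn (X.cycleOf (aPerm n n ℓ)) (hXsupp' _ hgT) ∈ l₁ ++ l₂ :=
          List.mem_append.mpr (Or.inl (List.mem_map.mpr
            ⟨⟨X.cycleOf (aPerm n n ℓ), hgT⟩, List.mem_attach _ _, rfl⟩))
        have hℓnot : ℓ ∉ (X.cycleOf (aPerm n n ℓ)).support := by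
          intro h
          have := hXsupp' _ hgT ℓ h
          rw [hz'] at this
          exact Bool.noConfusion this
        rw [prod_eq_of_mem _ hd _ hmem ℓ (mem_dbl_support.mpr (Or.inr hpg)),
          dbl_apply_flip hℓnot hpg]
  -- conclude
  have hcoe : ((aEl n n * x : ↥(treeGroup n)) : Equiv.Perm (Leaf n)) = aPerm n n * X := rfl
  rw [hcoe, Equiv.Perm.cycleType_eq (l₁ ++ l₂) h0 hcycs hd]
  -- multiset bookkeeping
  have hFcard : F.card = Multiset.count 1 c := by
    rw [hfix, Nat.card_eq_fintype_card, Fintype.card_subtype]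
  have e1 : ((l₁ ++ l₂).map (Finset.card ∘ Equiv.Perm.support) : Multiset ℕ)
      = Multiset.map (fun m => 2 * m) X.cycleType + Multiset.replicate (Multiset.count 1 c) 2 := by
    rw [List.map_append]
    have hcast : ((List.map (Finset.card ∘ Equiv.Perm.support) l₁
        ++ List.map (Finset.card ∘ Equiv.Perm.support) l₂ : List ℕ) : Multiset ℕ)
        = (List.map (Finset.card ∘ Equiv.Perm.support) l₁ : Multiset ℕ)
          + (List.map (Finset.card ∘ Equiv.Perm.support) l₂ : Multiset ℕ) := rfl
    rw [hcast]
    congr 1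
    · rw [hl₁, List.map_map]
      have e : List.map ((Finset.card ∘ Equiv.Perm.support) ∘
            (fun g : {g // g ∈ X.cycleFactorsFinset.toList} => dbl hn g.1 (hXsupp' g.1 g.2)))
            X.cycleFactorsFinset.toList.attach
          = List.map (fun h : Equiv.Perm (Leaf n) => 2 * h.support.card)
            X.cycleFactorsFinset.toList := by
        rw [show ((Finset.card ∘ Equiv.Perm.support) ∘
            (fun g : {g // g ∈ X.cycleFactorsFinset.toList} => dbl hn g.1 (hXsupp' g.1 g.2)))
            = fun g : {g // g ∈ X.cycleFactorsFinset.toList} => 2 * (g.1.support.card) from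
          funext fun g => dbl_support_card]
        exact List.attach_map_val (l := X.cycleFactorsFinset.toList) (f := fun h => 2 * h.support.card)
      rw [e, ← Multiset.map_coe, Finset.coe_toList, Equiv.Perm.cycleType_def, Multiset.map_map]
      rfl
    · rw [hl₂, List.map_map]
      have e : List.map ((Finset.card ∘ Equiv.Perm.support) ∘
            (fun p : Leaf n => Equiv.swap p (aPerm n n p))) F.toList
          = List.map (fun _ : Leaf n => 2) F.toList :=
        congrArg (fun f => List.map f F.toList)
          (funext fun p => Equiv.Perm.card_support_swap (Ne.symm (flip_ne hn p)))
      rw [e, ← Multiset.map_coe, Finset.coe_toList, Multiset.map_const',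
        show Multiset.card F.val = F.card from rfl, hFcard]
  rw [e1]
  -- now handle c
  have hsplit : c.filter (fun m => 2 ≤ m) + Multiset.replicate (Multiset.count 1 c) 1 = c := by
    have h1 : c.filter (fun m => ¬ 2 ≤ m) = Multiset.replicate (Multiset.count 1 c) 1 := by
      have e : c.filter (fun m => ¬ 2 ≤ m) = c.filter (· = 1) := by
        apply Multiset.filter_congr
        intro m hm
        have h9 := hpos m hm
        clear * - h9
        omega
      rw [e]
      exact Multiset.filter_eq' c 1
    rw [← h1, Multiset.filter_add_not]
  conv_rhs => rw [← hsplit]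
  rw [Multiset.map_add, Multiset.map_replicate, hcyc]
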